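/- For a finite connected graph, the quotient of lattice connections by based gauge transformations is parametrized by independent loop holonomies: if V and E are finite types, (V, E, s, t) is a graph connected to the base vertex b, and G is a group, then the quotient of the set of lattice connections E → G by the action of the based gauge group is in bijection with G^{|E| − (|V| − 1)}, i.e., with the set of maps Fin(card E − (card V − 1)) → G. -/

import Mathlib

/-- Two lattice connections `A B : E → G` on the graph `(V, E, s, t)` are
related by a based gauge transformation (based at `b ∈ V`). -/
def gaugeRel {V E G : Type*} [Group G] (s t : E → V) (b : V)
    (A B : E → G) : Prop :=
  ∃ g : V → G, g b = 1 ∧ ∀ e : E, g (t e) * A e * (g (s e))⁻¹ = B e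

/-- Iterated relation: `iterRel R n x y` means there is an `R`-chain of length `n`
from `x` to `y`. -/
def iterRel {V : Type*} (R : V → V → Prop) : ℕ → V → V → Prop
  | 0 => Eq
  | n+1 => fun x y => ∃ z, R x z ∧ iterRel R n z y

/-- Gauge-fixing auxiliary function, defined by recursion on a fuel parameter. -/
noncomputable def gAux {V E G : Type*} [Group G] [DecidableEq V]
    (s t : E → V) (b : V) (d : V → ℕ) (ε : {v : V // v ≠ b} → E) (A : E → G) :
    ℕ → V → G
  | 0, _ => 1
  | n+1, v =>
    if hv : v = b then 1
    else if s (ε ⟨v, hv⟩) = v ∧ d (t (ε ⟨v, hv⟩)) < d v then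
      gAux s t b d ε A n (t (ε ⟨v, hv⟩)) * A (ε ⟨v, hv⟩)
    else
      gAux s t b d ε A n (s (ε ⟨v, hv⟩)) * (A (ε ⟨v, hv⟩))⁻¹

lemma gAux_succ {V E G : Type*} [Group G] [DecidableEq V]
    (s t : E → V) (b : V) (d : V → ℕ) (ε : {v : V // v ≠ b} → E) (A : E → G)
    (n : ℕ) (v : V) :
    gAux s t b d ε A (n+1) v =
      if hv : v = b then 1
      else if s (ε ⟨v, hv⟩) = v ∧ d (t (ε ⟨v, hv⟩)) < d v then
        gAux s t b d ε A n (t (ε ⟨v, hv⟩)) * A (ε ⟨v, hv⟩)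
      else
        gAux s t b d ε A n (s (ε ⟨v, hv⟩)) * (A (ε ⟨v, hv⟩))⁻¹ := rfl

/-- For a finite connected graph, the quotient of lattice connections by based
gauge transformations is parametrized by independent loop holonomies: the
quotient of `E → G` by the action of the based gauge group is in bijection with
`G^{|E| − (|V| − 1)}`. -/
theorem quotient_lattice_connections_equiv {V E G : Type*} [Group G]
    [Fintype V] [Fintype E] (s t : E → V) (b : V)
    (hconn : ∀ v : V, Relation.EqvGen (fun x y => ∃ e : E, s e = x ∧ t e = y) v b) :
    Nonempty (Quot (gaugeRel (G := G) s t b) ≃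
      (Fin (Fintype.card E - (Fintype.card V - 1)) → G)) := by
  classical
  -- the symmetrized edge relation
  set Rel : V → V → Prop := fun x y => ∃ e, (s e = x ∧ t e = y) ∨ (s e = y ∧ t e = x)
    with hRel
  have hRelSymm : Symmetric Rel := by
    rintro x y ⟨e, h | h⟩
    · exact ⟨e, Or.inr h⟩
    · exact ⟨e, Or.inl h⟩
  -- every vertex is connected to b with a finite chain
  have hrtg : ∀ x y : V, Relation.EqvGen (fun x y => ∃ e : E, s e = x ∧ t e = y) x y →
      Relation.ReflTransGen Rel x y := by
    intro x y h
    induction h with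
    | rel x y h =>
      obtain ⟨e, he1, he2⟩ := h
      exact Relation.ReflTransGen.single ⟨e, Or.inl ⟨he1, he2⟩⟩
    | refl => exact Relation.ReflTransGen.refl
    | symm x y _ ih => exact (@Relation.ReflTransGen.stdSymm _ Rel ⟨hRelSymm⟩).symm _ _ ih
    | trans x y z _ _ ih1 ih2 => exact ih1.trans ih2
  have hex : ∀ v : V, ∃ n, iterRel Rel n v b := by
    intro v
    have hrt : Relation.ReflTransGen Rel v b := hrtg v b (hconn v)
    induction hrt using Relation.ReflTransGen.head_induction_on with
    | refl => exact ⟨0, rfl⟩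
    | head h _ ih =>
      obtain ⟨n, hn⟩ := ih
      exact ⟨n + 1, _, h, hn⟩
  -- distance to base vertex
  set d : V → ℕ := fun v => Nat.find (hex v) with hd
  have hdspec : ∀ v, iterRel Rel (d v) v b := fun v => Nat.find_spec (hex v)
  have hdmin : ∀ v n, iterRel Rel n v b → d v ≤ n := fun v n h => Nat.find_le h
  have hd0 : ∀ v, d v = 0 → v = b := by
    intro v h
    have := hdspec v
    rw [h] at this
    exact this
  -- choice of a parent edge for each non-base vertex
  have hP : ∀ (v : V), v ≠ b → ∃ e,
      (s e = v ∧ d (t e) < d v) ∨ (t e = v ∧ d (s e) < d v) := by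
    intro v hv
    have h1 : d v ≠ 0 := fun h => hv (hd0 v h)
    obtain ⟨m, hm⟩ : ∃ m, d v = m + 1 := ⟨d v - 1, by omega⟩
    have := hdspec v
    rw [hm] at this
    obtain ⟨z, ⟨e, he⟩, hiter⟩ := this
    have hz : d z ≤ m := hdmin z m hiter
    rcases he with ⟨he1, he2⟩ | ⟨he1, he2⟩
    · exact ⟨e, Or.inl ⟨he1, by rw [he2]; omega⟩⟩
    · exact ⟨e, Or.inr ⟨he2, by rw [he1]; omega⟩⟩
  set ε : {v : V // v ≠ b} → E := fun v => Classical.choose (hP v.1 v.2) with hε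
  have hεspec : ∀ (v : V) (hv : v ≠ b),
      (s (ε ⟨v, hv⟩) = v ∧ d (t (ε ⟨v, hv⟩)) < d v) ∨
      (t (ε ⟨v, hv⟩) = v ∧ d (s (ε ⟨v, hv⟩)) < d v) :=
    fun v hv => Classical.choose_spec (hP v hv)
  -- ε is injective
  have hεinj : Function.Injective ε := by
    rintro ⟨v, hv⟩ ⟨u, hu⟩ h
    have h1 := hεspec v hv
    have h2 := hεspec u hu
    rw [h] at h1
    ext
    show v = u
    rcases h1 with ⟨ha1, ha2⟩ | ⟨ha1, ha2⟩ <;> rcases h2 with ⟨hb1, hb2⟩ | ⟨hb1, hb2⟩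
    · rw [← ha1, hb1]
    · rw [hb1] at ha2; rw [ha1] at hb2; omega
    · rw [hb1] at ha2; rw [ha1] at hb2; omega
    · rw [← ha1, hb1]
  -- stability of gAux in the fuel parameter
  have gstep : ∀ (A : E → G) (n : ℕ) (v : V), d v ≤ n →
      gAux s t b d ε A (n + 1) v = gAux s t b d ε A n v := by
    intro A n
    induction n with
    | zero =>
      intro v hv
      have hb : v = b := hd0 v (Nat.le_zero.mp hv)
      rw [gAux_succ, dif_pos hb]
      rfl
    | succ n ih =>
      intro v hv
      by_cases hb : v = b
      · rw [gAux_succ, gAux_succ, dif_pos hb, dif_pos hb]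
      · rw [gAux_succ, gAux_succ, dif_neg hb, dif_neg hb]
        rcases hεspec v hb with ⟨h1, h2⟩ | ⟨h1, h2⟩
        · have hc : s (ε ⟨v, hb⟩) = v ∧ d (t (ε ⟨v, hb⟩)) < d v := ⟨h1, h2⟩
          rw [if_pos hc, if_pos hc, ih _ (by omega)]
        · by_cases hc : s (ε ⟨v, hb⟩) = v ∧ d (t (ε ⟨v, hb⟩)) < d v
          · rw [if_pos hc, if_pos hc, ih _ (by omega)]
          · rw [if_neg hc, if_neg hc, ih _ (by omega)]
  have gstable : ∀ (A : E → G) (n : ℕ) (v : V), d v ≤ n →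
      gAux s t b d ε A n v = gAux s t b d ε A (d v) v := by
    intro A n
    induction n with
    | zero => intro v hv; rw [Nat.le_zero.mp hv]
    | succ n ih =>
      intro v hv
      rcases Nat.lt_or_ge (d v) (n+1) with h | h
      · rw [gstep A n v (by omega), ih v (by omega)]
      · have : d v = n + 1 := by omega
        rw [this]
  -- the normalizing gauge transformation
  set gg : (E → G) → V → G := fun A v => gAux s t b d ε A (d v) v with hgg
  have ggb : ∀ A, gg A b = 1 := by
    intro A
    have hb0 : d b = 0 := Nat.le_zero.mp (hdmin b 0 rfl)
    show gAux s t b d ε A (d b) b = 1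
    rw [hb0]
    rfl
  -- on parent edges, the gauge-transformed connection is 1
  have ggfix : ∀ (A : E → G) (v : V) (hv : v ≠ b),
      gg A (t (ε ⟨v, hv⟩)) * A (ε ⟨v, hv⟩) * (gg A (s (ε ⟨v, hv⟩)))⁻¹ = 1 := by
    intro A v hv
    obtain ⟨m, hm⟩ : ∃ m, d v = m + 1 :=
      ⟨d v - 1, by have : d v ≠ 0 := fun h => hv (hd0 v h); omega⟩
    have hv' : gg A v = gAux s t b d ε A (m + 1) v := by
      show gAux s t b d ε A (d v) v = _
      rw [hm]
    rcases hεspec v hv with ⟨h1, h2⟩ | ⟨h1, h2⟩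
    · have hc : s (ε ⟨v, hv⟩) = v ∧ d (t (ε ⟨v, hv⟩)) < d v := ⟨h1, h2⟩
      have hval : gg A v = gg A (t (ε ⟨v, hv⟩)) * A (ε ⟨v, hv⟩) := by
        rw [hv', gAux_succ, dif_neg hv, if_pos hc, gstable A m _ (by omega)]
      rw [h1, ← hval]
      group
    · have hcn : ¬ (s (ε ⟨v, hv⟩) = v ∧ d (t (ε ⟨v, hv⟩)) < d v) := by
        rintro ⟨hc1, hc2⟩
        rw [h1] at hc2
        omega
      have hval : gg A v = gg A (s (ε ⟨v, hv⟩)) * (A (ε ⟨v, hv⟩))⁻¹ := by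
        rw [hv', gAux_succ, dif_neg hv, if_neg hcn, gstable A m _ (by omega)]
      rw [h1, hval]
      group
  -- the normalization map
  set N : (E → G) → (E → G) := fun A e => gg A (t e) * A e * (gg A (s e))⁻¹ with hN
  have hNrel : ∀ A, gaugeRel s t b A (N A) := fun A => ⟨gg A, ggb A, fun e => rfl⟩
  have hNfix : ∀ A (v : V) (hv : v ≠ b), N A (ε ⟨v, hv⟩) = 1 :=
    fun A v hv => ggfix A v hv
  -- uniqueness: a gauge transformation between two normalized connections is trivial
  have huniq : ∀ (A B : E → G) (g : V → G), g b = 1 →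
      (∀ e, g (t e) * A e * (g (s e))⁻¹ = B e) →
      (∀ (v : V) (hv : v ≠ b), A (ε ⟨v, hv⟩) = 1) →
      (∀ (v : V) (hv : v ≠ b), B (ε ⟨v, hv⟩) = 1) →
      ∀ v, g v = 1 := by
    intro A B g hgb hgAB hA hB
    have key : ∀ n v, d v ≤ n → g v = 1 := by
      intro n
      induction n with
      | zero => intro v hv; rw [hd0 v (Nat.le_zero.mp hv)]; exact hgb
      | succ n ih =>
        intro v hv
        by_cases hb : v = b
        · rw [hb]; exact hgb
        · have he := hgAB (ε ⟨v, hb⟩)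
          rw [hA v hb, hB v hb] at he
          have hts : g (t (ε ⟨v, hb⟩)) = g (s (ε ⟨v, hb⟩)) := by
            have h2 : g (t (ε ⟨v, hb⟩)) * (g (s (ε ⟨v, hb⟩)))⁻¹ = 1 := by
              rw [← he]; group
            exact mul_inv_eq_one.mp h2
          rcases hεspec v hb with ⟨h1, h2⟩ | ⟨h1, h2⟩
          · rw [← h1, ← hts]
            exact ih _ (by omega)
          · rw [← h1, hts]
            exact ih _ (by omega)
    intro v
    exact key (d v) v le_rfl
  -- gaugeRel is symmetric and transitive
  have hsymm : ∀ A B : E → G, gaugeRel s t b A B → gaugeRel s t b B A := by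
    rintro A B ⟨g, hg1, hg2⟩
    refine ⟨fun v => (g v)⁻¹, by simp [hg1], fun e => ?_⟩
    have := hg2 e
    rw [← this]
    group
  have htrans : ∀ A B C : E → G,
      gaugeRel s t b A B → gaugeRel s t b B C → gaugeRel s t b A C := by
    rintro A B C ⟨g, hg1, hg2⟩ ⟨h, hh1, hh2⟩
    refine ⟨fun v => h v * g v, by simp [hg1, hh1], fun e => ?_⟩
    have e1 := hg2 e
    have e2 := hh2 e
    rw [← e2, ← e1]
    group
  -- normalized connections are equal if gauge-related
  have hNuniq : ∀ A B : E → G, gaugeRel s t b A B → N A = N B := by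
    intro A B hAB
    obtain ⟨g, hg1, hg2⟩ := htrans _ _ _ (htrans _ _ _ (hsymm _ _ (hNrel A)) hAB) (hNrel B)
    have hg := huniq (N A) (N B) g hg1 hg2 (hNfix A) (hNfix B)
    funext e
    rw [← hg2 e, hg (t e), hg (s e)]
    group
  -- N fixes normalized connections
  have hNfixpt : ∀ A : E → G, (∀ (v : V) (hv : v ≠ b), A (ε ⟨v, hv⟩) = 1) → N A = A := by
    intro A hA
    obtain ⟨g, hg1, hg2⟩ := hsymm _ _ (hNrel A)
    have hg := huniq (N A) A g hg1 hg2 (hNfix A) hA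
    funext e
    rw [← hg2 e, hg (t e), hg (s e)]
    group
  -- the set of normalized connections
  set S := {A : E → G // ∀ (v : V) (hv : v ≠ b), A (ε ⟨v, hv⟩) = 1} with hS
  -- equivalence between the quotient and S
  have equiv1 : Quot (gaugeRel (G := G) s t b) ≃ S := by
    refine
      { toFun := Quot.lift (fun A => (⟨N A, hNfix A⟩ : S)) ?_
        invFun := fun A => Quot.mk _ A.1
        left_inv := ?_
        right_inv := ?_ }
    · intro A B hAB
      exact Subtype.ext (hNuniq A B hAB)
    · intro q
      induction q using Quot.inductionOn with
      | _ A => exact (Quot.sound (hsymm _ _ (hNrel A)))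
    · rintro ⟨A, hA⟩
      exact Subtype.ext (hNfixpt A hA)
  -- S is equivalent to functions on non-tree edges
  set T : Set E := Set.range ε with hT
  have equiv2 : S ≃ ({e : E // e ∉ T} → G) := by
    refine
      { toFun := fun A e => A.1 e.1
        invFun := fun f => ⟨fun e => if h : e ∈ T then 1 else f ⟨e, h⟩, ?_⟩
        left_inv := ?_
        right_inv := ?_ }
    · intro v hv
      have hm : ε ⟨v, hv⟩ ∈ T := Set.mem_range_self _
      simp [hm]
    · rintro ⟨A, hA⟩
      refine Subtype.ext (funext fun e => ?_)
      by_cases h : e ∈ T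
      · obtain ⟨⟨v, hv⟩, hve⟩ := h
        show (if h : e ∈ T then 1 else A e) = A e
        rw [dif_pos ⟨⟨v, hv⟩, hve⟩, ← hve, hA v hv]
      · show (if h : e ∈ T then 1 else A e) = A e
        rw [dif_neg h]
    · intro f
      funext e
      simp [e.2]
  -- counting
  have hcard : Fintype.card {e : E // e ∉ T} = Fintype.card E - (Fintype.card V - 1) := by
    have h1 : Fintype.card {e : E // e ∈ T} = Fintype.card V - 1 := by
      have h2 : Fintype.card {e : E // e ∈ T} = Fintype.card {v : V // v ≠ b} := by
        apply Fintype.card_congr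
        exact (Equiv.ofInjective ε hεinj).symm
      rw [h2]
      have h3 := Fintype.card_subtype_compl (fun v : V => v = b)
      simp only [Fintype.card_subtype_eq] at h3
      convert h3 using 2
    have h4 := Fintype.card_subtype_compl (fun e : E => e ∈ T)
    rw [h1] at h4
    convert h4 using 2
  have equiv3 : ({e : E // e ∉ T} → G) ≃ (Fin (Fintype.card E - (Fintype.card V - 1)) → G) :=
    Equiv.arrowCongr (Fintype.equivFinOfCardEq hcard) (Equiv.refl G)
  exact ⟨equiv1.trans (equiv2.trans equiv3)⟩
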